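/- Let φ ∈ ℂ² with φ ≠ 0 and let A : ℝ³ → ℝ³ be a real linear map. Suppose (i) ∑_{i=1}^{3} e_i·((A e_i)·φ) = 0, and (ii) Re⟨φ, X·((A Y)·φ) + Y·((A X)·φ)⟩ = 0 for all X, Y ∈ ℝ³. Then A = 0. -/

import Mathlib

/-- Clifford multiplication of a vector `X ∈ ℝ³` on a spinor `φ ∈ ℂ²`, given by
`X · φ = -i (X₁σ₁ + X₂σ₂ + X₃σ₃) φ` where `σ₁, σ₂, σ₃` are the Pauli matrices. -/
noncomputable def cliffordMul (X : EuclideanSpace ℝ (Fin 3)) (φ : EuclideanSpace ℂ (Fin 2)) :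
    EuclideanSpace ℂ (Fin 2) :=
  (WithLp.equiv 2 (Fin 2 → ℂ)).symm
    ![-Complex.I * ((X 2 : ℂ) * φ 0 + ((X 0 : ℂ) - Complex.I * (X 1 : ℂ)) * φ 1),
      -Complex.I * (((X 0 : ℂ) + Complex.I * (X 1 : ℂ)) * φ 0 - (X 2 : ℂ) * φ 1)]

/-- The standard orthonormal basis vector `e_j` of `ℝ³`. -/
noncomputable def stdVec (j : Fin 3) : EuclideanSpace ℝ (Fin 3) :=
  EuclideanSpace.single j 1

set_option maxHeartbeats 2000000 in
theorem dirac_eq_and_energy_momentum_zero_implies_parallel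
    (φ : EuclideanSpace ℂ (Fin 2)) (hφ : φ ≠ 0)
    (A : EuclideanSpace ℝ (Fin 3) →ₗ[ℝ] EuclideanSpace ℝ (Fin 3))
    (hD : ∑ i : Fin 3, cliffordMul (stdVec i) (cliffordMul (A (stdVec i)) φ) = 0)
    (hQ : ∀ X Y : EuclideanSpace ℝ (Fin 3),
      (inner ℂ φ (cliffordMul X (cliffordMul (A Y) φ)
        + cliffordMul Y (cliffordMul (A X) φ)) : ℂ).re = 0) :
    A = 0 := by
  have h00 := hQ (stdVec 0) (stdVec 0)
  have h11 := hQ (stdVec 1) (stdVec 1)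
  have h22 := hQ (stdVec 2) (stdVec 2)
  have h01 := hQ (stdVec 0) (stdVec 1)
  have h02 := hQ (stdVec 0) (stdVec 2)
  have h12 := hQ (stdVec 1) (stdVec 2)
  rw [Fin.sum_univ_three] at hD
  have hD0 : (cliffordMul (stdVec 0) (cliffordMul (A (stdVec 0)) φ)
      + cliffordMul (stdVec 1) (cliffordMul (A (stdVec 1)) φ)
      + cliffordMul (stdVec 2) (cliffordMul (A (stdVec 2)) φ)) 0 = 0 := by rw [hD]; rfl
  have hD1 : (cliffordMul (stdVec 0) (cliffordMul (A (stdVec 0)) φ)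
      + cliffordMul (stdVec 1) (cliffordMul (A (stdVec 1)) φ)
      + cliffordMul (stdVec 2) (cliffordMul (A (stdVec 2)) φ)) 1 = 0 := by rw [hD]; rfl
  simp only [cliffordMul, stdVec, PiLp.inner_apply, RCLike.inner_apply, Fin.sum_univ_two,
    WithLp.equiv_symm_apply, PiLp.toLp_apply, EuclideanSpace.single_apply, PiLp.add_apply,
    Matrix.cons_val_zero, Matrix.cons_val_one, Matrix.head_cons,
    show (2:Fin 3) ≠ 0 from by decide, show (2:Fin 3) ≠ 1 from by decide,
    show (0:Fin 3) ≠ 1 from by decide, show (0:Fin 3) ≠ 2 from by decide,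
    show (1:Fin 3) ≠ 0 from by decide, show (1:Fin 3) ≠ 2 from by decide,
    if_true, if_false, ite_true, ite_false] at h00 h11 h22 h01 h02 h12 hD0 hD1
  norm_num at h00 h11 h22 h01 h02 h12 hD0 hD1
  rw [Complex.ext_iff] at hD0 hD1
  simp only [Complex.add_re, Complex.add_im, Complex.sub_re, Complex.sub_im,
    Complex.mul_re, Complex.mul_im, Complex.neg_re, Complex.neg_im,
    Complex.I_re, Complex.I_im, Complex.ofReal_re, Complex.ofReal_im,
    Complex.zero_re, Complex.zero_im] at hD0 hD1
  norm_num at hD0 hD1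
  obtain ⟨hD0r, hD0i⟩ := hD0
  obtain ⟨hD1r, hD1i⟩ := hD1
  -- abbreviations for matrix entries: m r c = A (single c 1) r
  set m00 := A (EuclideanSpace.single 0 1) 0 with hm00
  set m10 := A (EuclideanSpace.single 0 1) 1 with hm10
  set m20 := A (EuclideanSpace.single 0 1) 2 with hm20
  set m01 := A (EuclideanSpace.single 1 1) 0 with hm01
  set m11 := A (EuclideanSpace.single 1 1) 1 with hm11
  set m21 := A (EuclideanSpace.single 1 1) 2 with hm21
  set m02 := A (EuclideanSpace.single 2 1) 0 with hm02
  set m12 := A (EuclideanSpace.single 2 1) 1 with hm12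
  set m22 := A (EuclideanSpace.single 2 1) 2 with hm22
  -- nonzero component of φ
  have hcomp : φ 0 ≠ 0 ∨ φ 1 ≠ 0 := by
    by_contra hc
    push_neg at hc
    exact hφ (PiLp.ext fun i => by fin_cases i <;> simp [hc.1, hc.2])
  have hn : 0 < (φ 0).re^2 + (φ 0).im^2 + (φ 1).re^2 + (φ 1).im^2 := by
    rcases hcomp with hp | hp
    · have h1 := Complex.normSq_pos.mpr hp
      have h2 := Complex.normSq_nonneg (φ 1)
      simp only [Complex.normSq_apply] at h1 h2
      nlinarith
    · have h1 := Complex.normSq_pos.mpr hp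
      have h2 := Complex.normSq_nonneg (φ 0)
      simp only [Complex.normSq_apply] at h1 h2
      nlinarith
  have hn' : ((φ 0).re^2 + (φ 0).im^2 + (φ 1).re^2 + (φ 1).im^2) ≠ 0 := ne_of_gt hn
  -- diagonal entries vanish
  have e00 : m00 = 0 := by
    have h : m00 * (2 * ((φ 0).re^2 + (φ 0).im^2 + (φ 1).re^2 + (φ 1).im^2)) = 0 := by
      linear_combination -h00
    rcases mul_eq_zero.mp h with h | h
    · exact h
    · exact absurd h (by positivity)
  have e11 : m11 = 0 := by
    have h : m11 * (2 * ((φ 0).re^2 + (φ 0).im^2 + (φ 1).re^2 + (φ 1).im^2)) = 0 := by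
      linear_combination -h11
    rcases mul_eq_zero.mp h with h | h
    · exact h
    · exact absurd h (by positivity)
  have e22 : m22 = 0 := by
    have h : m22 * (2 * ((φ 0).re^2 + (φ 0).im^2 + (φ 1).re^2 + (φ 1).im^2)) = 0 := by
      linear_combination -h22
    rcases mul_eq_zero.mp h with h | h
    · exact h
    · exact absurd h (by positivity)
  -- skew-symmetry
  have s01 : m01 + m10 = 0 := by
    have h : (m01 + m10) * ((φ 0).re^2 + (φ 0).im^2 + (φ 1).re^2 + (φ 1).im^2) = 0 := by
      linear_combination -h01
    exact (mul_eq_zero.mp h).resolve_right hn'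
  have s02 : m02 + m20 = 0 := by
    have h : (m02 + m20) * ((φ 0).re^2 + (φ 0).im^2 + (φ 1).re^2 + (φ 1).im^2) = 0 := by
      linear_combination -h02
    exact (mul_eq_zero.mp h).resolve_right hn'
  have s12 : m12 + m21 = 0 := by
    have h : (m12 + m21) * ((φ 0).re^2 + (φ 0).im^2 + (φ 1).re^2 + (φ 1).im^2) = 0 := by
      linear_combination -h12
    exact (mul_eq_zero.mp h).resolve_right hn'
  -- the antisymmetric part vanishes
  have key0r : ((m21-m12)^2+(m02-m20)^2+(m10-m01)^2) * (φ 0).re = 0 := by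
    linear_combination (-(m10-m01)) * hD0i + (m02-m20) * hD1r + (-(m21-m12)) * hD1i
      + ((-(m10-m01))*(φ 0).im + (m02-m20)*(φ 1).re + (-(m21-m12))*(φ 1).im) * (e00 + e11 + e22)
  have key0i : ((m21-m12)^2+(m02-m20)^2+(m10-m01)^2) * (φ 0).im = 0 := by
    linear_combination (m10-m01) * hD0r + (m21-m12) * hD1r + (m02-m20) * hD1i
      + ((m10-m01)*(φ 0).re + (m21-m12)*(φ 1).re + (m02-m20)*(φ 1).im) * (e00 + e11 + e22)
  have key1r : ((m21-m12)^2+(m02-m20)^2+(m10-m01)^2) * (φ 1).re = 0 := by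
    linear_combination (-(m02-m20)) * hD0r + (-(m21-m12)) * hD0i + (m10-m01) * hD1i
      + ((-(m02-m20))*(φ 0).re + (-(m21-m12))*(φ 0).im + (m10-m01)*(φ 1).im) * (e00 + e11 + e22)
  have key1i : ((m21-m12)^2+(m02-m20)^2+(m10-m01)^2) * (φ 1).im = 0 := by
    linear_combination (m21-m12) * hD0r + (-(m02-m20)) * hD0i + (-(m10-m01)) * hD1r
      + ((m21-m12)*(φ 0).re + (-(m02-m20))*(φ 0).im + (-(m10-m01))*(φ 1).re) * (e00 + e11 + e22)
  have hw : (m21-m12)^2+(m02-m20)^2+(m10-m01)^2 = 0 := by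
    rcases hcomp with hp | hp
    · rcases not_and_or.mp (fun h => hp (Complex.ext h.1 h.2)) with h | h
      · exact (mul_eq_zero.mp key0r).resolve_right h
      · exact (mul_eq_zero.mp key0i).resolve_right h
    · rcases not_and_or.mp (fun h => hp (Complex.ext h.1 h.2)) with h | h
      · exact (mul_eq_zero.mp key1r).resolve_right h
      · exact (mul_eq_zero.mp key1i).resolve_right h
  clear h00 h11 h22 h01 h02 h12 hD0r hD0i hD1r hD1i key0r key0i key1r key1i hQ hD hn hn'
  have w1 : m21 - m12 = 0 := by
    nlinarith [sq_nonneg (m21 - m12), sq_nonneg (m02 - m20), sq_nonneg (m10 - m01)]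
  have w2 : m02 - m20 = 0 := by
    nlinarith [sq_nonneg (m21 - m12), sq_nonneg (m02 - m20), sq_nonneg (m10 - m01)]
  have w3 : m10 - m01 = 0 := by
    nlinarith [sq_nonneg (m21 - m12), sq_nonneg (m02 - m20), sq_nonneg (m10 - m01)]
  have z01 : m01 = 0 := by linarith
  have z10 : m10 = 0 := by linarith
  have z02 : m02 = 0 := by linarith
  have z20 : m20 = 0 := by linarith
  have z12 : m12 = 0 := by linarith
  have z21 : m21 = 0 := by linarith
  -- conclude
  apply Module.Basis.ext (EuclideanSpace.basisFun (Fin 3) ℝ).toBasis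
  intro i
  rw [OrthonormalBasis.coe_toBasis, EuclideanSpace.basisFun_apply, LinearMap.zero_apply]
  refine PiLp.ext fun j => ?_
  show A (EuclideanSpace.single i 1) j = (0 : EuclideanSpace ℝ (Fin 3)) j
  fin_cases i <;> fin_cases j <;>
    simpa using (by assumption :
      A (EuclideanSpace.single _ 1) _ = 0)
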